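/- Let x, z ∈ R^d with ‖x‖₂ = 1, ‖z‖₂ ≤ 1, ⟨x, z⟩ ≥ 0, and η > 0. Let x' = (x + ηz)/‖x + ηz‖₂. Then ⟨x' - x, z⟩ ≥ (1/η) · ‖x' - x‖₂². -/

import Mathlib

open scoped InnerProductSpace

theorem stmt_5 {d : ℕ} (x z : EuclideanSpace ℝ (Fin d))
    (hx : ‖x‖ = 1) (hz : ‖z‖ ≤ 1) (hxz : 0 ≤ ⟪x, z⟫_ℝ)
    (η : ℝ) (hη : 0 < η)
    (x' : EuclideanSpace ℝ (Fin d))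
    (hx' : x' = ‖x + η • z‖⁻¹ • (x + η • z)) :
    ⟪x' - x, z⟫_ℝ ≥ (1 / η) * ‖x' - x‖ ^ 2 := by
  set y := x + η • z with hy
  have hxy : ⟪x, y⟫_ℝ = 1 + η * ⟪x, z⟫_ℝ := by
    simp only [hy, inner_add_right, real_inner_smul_right, real_inner_self_eq_norm_sq, hx]
    ring
  have ha' : ⟪x, y⟫_ℝ ≤ ‖y‖ := by
    have := real_inner_le_norm x y; rwa [hx, one_mul] at this
  have hn : (1:ℝ) ≤ ‖y‖ := by
    nlinarith [mul_nonneg hη.le hxz]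
  have hnpos : (0:ℝ) < ‖y‖ := lt_of_lt_of_le one_pos hn
  have hzeq : z = η⁻¹ • (y - x) := by
    rw [hy, add_sub_cancel_left, smul_smul, inv_mul_cancel₀ hη.ne', one_smul]
  have hyy : ⟪y, y⟫_ℝ = ‖y‖ ^ 2 := real_inner_self_eq_norm_sq y
  have hxx : ⟪x, x⟫_ℝ = 1 := by rw [real_inner_self_eq_norm_sq, hx]; ring
  have hx'x : ⟪x', x⟫_ℝ = ‖y‖⁻¹ * ⟪x, y⟫_ℝ := by
    rw [hx', real_inner_smul_left, real_inner_comm]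
  have hx'n : ‖x'‖ = 1 := by
    rw [hx', norm_smul, norm_inv, norm_norm, inv_mul_cancel₀ hnpos.ne']
  have hLHS : ⟪x' - x, z⟫_ℝ
      = η⁻¹ * (‖y‖ - ‖y‖⁻¹ * ⟪x, y⟫_ℝ - ⟪x, y⟫_ℝ + 1) := by
    rw [hzeq, real_inner_smul_right, inner_sub_left, inner_sub_right, inner_sub_right,
      hx', real_inner_smul_left, real_inner_smul_left, hyy, hxx, real_inner_comm y x]
    field_simp
    ring
  have hRHS : ‖x' - x‖ ^ 2 = 2 - 2 * (‖y‖⁻¹ * ⟪x, y⟫_ℝ) := by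
    rw [norm_sub_sq_real, hx'n, hx'x, hx]
    ring
  rw [hLHS, hRHS, ge_iff_le, one_div]
  have key : 0 ≤ (‖y‖ - 1) * (‖y‖ - ⟪x, y⟫_ℝ) := by
    nlinarith
  rw [mul_le_mul_iff_right₀ (by positivity : (0:ℝ) < η⁻¹)]
  have h1 : ‖y‖⁻¹ * ⟪x, y⟫_ℝ = ⟪x, y⟫_ℝ / ‖y‖ := by ring
  rw [h1]
  generalize hA : ⟪x, y⟫_ℝ = A at *
  generalize hN : ‖y‖ = N at *
  have h2 : (2 - 2 * (A / N)) * N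
      ≤ (N - A / N - A + 1) * N := by
    field_simp
    nlinarith
  exact le_of_mul_le_mul_right h2 hnpos
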